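/- Let X be a random vector in ℝ^d with characteristic function φ(k) = E[exp(i k·X)] satisfying (1 − φ(k)) / (L(|k|) |k|^α) → 1 as |k| → 0, where α > 2 and L : (0,∞) → (0,∞) is slowly varying at zero. Then X = 0 almost surely. -/

import Mathlib

open MeasureTheory ProbabilityTheory Filter Real Topology

noncomputable section

/-- Characteristic function with the convention `φ(k) = E[exp(i k·X)]`. -/
def charFn' {d : ℕ} {Ω : Type*} [MeasureSpace Ω]
    (X : Ω → EuclideanSpace ℝ (Fin d)) (k : EuclideanSpace ℝ (Fin d)) : ℂ :=
  ∫ ω, Complex.exp (Complex.I * ((inner ℝ k (X ω) : ℝ) : ℂ))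

/-- `L` is slowly varying at zero: for all `a > 0`, `L(at)/L(t) → 1` as `t → 0⁺`. -/
def SlowlyVaryingAtZero (L : ℝ → ℝ) : Prop :=
  ∀ a : ℝ, 0 < a → Filter.Tendsto (fun t => L (a * t) / L t) (𝓝[>] (0 : ℝ)) (𝓝 1)

lemma one_sub_cos_eq' (x : ℝ) : 1 - Real.cos x = 2 * Real.sin (x/2)^2 := by
  have h := Real.sin_sq_eq_half_sub (x/2)
  have h2 : 2 * (x/2) = x := by ring
  rw [h2] at h; rw [h]; ring

lemma sin_div_lim' : Tendsto (fun u : ℝ => Real.sin u / u) (𝓝[≠] 0) (𝓝 1) := by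
  have h := (Real.hasDerivAt_sin 0)
  rw [hasDerivAt_iff_tendsto_slope] at h
  simp only [Real.cos_zero] at h
  refine h.congr' ?_
  filter_upwards [self_mem_nhdsWithin] with u hu
  simp [slope_def_field, div_eq_iff, hu]

lemma cos_lim' (y : ℝ) :
    Tendsto (fun t : ℝ => (1 - Real.cos (t * y)) / t^2) (𝓝[>] 0) (𝓝 (y^2/2)) := by
  rcases eq_or_ne y 0 with rfl | hy
  · simp only [mul_zero, Real.cos_zero, sub_self, zero_div]
    simpa using tendsto_const_nhds
  · have hmap : Tendsto (fun t : ℝ => t * y / 2) (𝓝[>] 0) (𝓝[≠] 0) := by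
      apply tendsto_nhdsWithin_of_tendsto_nhds_of_eventually_within
      · have : Tendsto (fun t : ℝ => t * y / 2) (𝓝 0) (𝓝 (0 * y / 2)) :=
          (tendsto_id.mul_const y).div_const 2
        simpa using this.mono_left nhdsWithin_le_nhds
      · filter_upwards [self_mem_nhdsWithin] with t ht
        have : t ≠ 0 := ne_of_gt ht
        simp [div_eq_zero_iff, mul_eq_zero, this, hy]
    have hsin : Tendsto (fun t : ℝ => Real.sin (t * y / 2) / (t * y / 2)) (𝓝[>] 0) (𝓝 1) :=
      sin_div_lim'.comp hmap
    have := ((hsin.mul hsin).const_mul (y^2/2))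
    rw [mul_one, mul_one] at this
    refine this.congr' ?_
    filter_upwards [self_mem_nhdsWithin] with t ht
    have ht' : t ≠ 0 := ne_of_gt ht
    rw [one_sub_cos_eq']
    field_simp

lemma sv_seq' (L : ℝ → ℝ) (hLpos : ∀ t : ℝ, 0 < t → 0 < L t)
    (hL : SlowlyVaryingAtZero L) (δ : ℝ) (hδ : 0 < δ) :
    ∃ t : ℕ → ℝ, (∀ n, 0 < t n) ∧ Tendsto t atTop (𝓝 0) ∧
      Tendsto (fun n => L (t n) * t n ^ δ) atTop (𝓝 0) := by
  set c : ℝ := (2:ℝ) ^ (δ/2) with hc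
  have hc1 : 1 < c := Real.one_lt_rpow_iff_of_pos (by norm_num) |>.2 (Or.inl ⟨by norm_num, by positivity⟩)
  have hcpos : 0 < c := lt_trans one_pos hc1
  have hev : ∀ᶠ s in 𝓝[>] (0:ℝ), L ((1/2) * s) / L s < c :=
    (hL (1/2) (by norm_num)).eventually_lt_const hc1
  obtain ⟨ε, hε, hball⟩ := Metric.mem_nhdsWithin_iff.1 hev
  set t₀ : ℝ := ε / 2 with ht₀
  have ht₀pos : 0 < t₀ := by positivity
  have key : ∀ s : ℝ, 0 < s → s ≤ t₀ → L (s / 2) ≤ c * L s := by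
    intro s hs hle
    have hmem : s ∈ Metric.ball (0:ℝ) ε ∩ Set.Ioi 0 := by
      refine ⟨?_, hs⟩
      simp only [Metric.mem_ball, Real.dist_eq, sub_zero, abs_of_pos hs]
      linarith
    have h1 : L ((1/2) * s) / L s < c := hball hmem
    have hLs := hLpos s hs
    rw [div_lt_iff₀ hLs] at h1
    have h2 : L ((1/2) * s) ≤ c * L s := le_of_lt h1
    rwa [one_div, inv_mul_eq_div] at h2
  set t : ℕ → ℝ := fun n => t₀ / 2 ^ n with htdef
  have htpos : ∀ n, 0 < t n := fun n => by positivity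
  have htle : ∀ n, t n ≤ t₀ := by
    intro n
    apply div_le_self ht₀pos.le
    exact one_le_pow₀ (by norm_num)
  have hLbound : ∀ n, L (t n) ≤ c ^ n * L t₀ := by
    intro n
    induction n with
    | zero => simp [htdef]
    | succ n ih =>
      have hstep : L (t n / 2) ≤ c * L (t n) := key (t n) (htpos n) (htle n)
      have heq : t (n+1) = t n / 2 := by
        simp only [htdef]; rw [pow_succ]; ring
      rw [heq]
      calc L (t n / 2) ≤ c * L (t n) := hstep
        _ ≤ c * (c ^ n * L t₀) := mul_le_mul_of_nonneg_left ih hcpos.le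
        _ = c ^ (n+1) * L t₀ := by ring
  have htend : Tendsto t atTop (𝓝 0) := by
    have : Tendsto (fun n : ℕ => t₀ * (1/2:ℝ) ^ n) atTop (𝓝 (t₀ * 0)) :=
      (tendsto_pow_atTop_nhds_zero_of_lt_one (by norm_num) (by norm_num)).const_mul t₀
    rw [mul_zero] at this
    refine this.congr fun n => ?_
    simp [htdef, div_eq_mul_inv, inv_pow]
  refine ⟨t, htpos, htend, ?_⟩
  set r : ℝ := c / (2:ℝ)^δ with hr
  have hrpos : 0 < r := by positivity
  have hr1 : r < 1 := by
    rw [hr, div_lt_one (by positivity), hc]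
    exact Real.rpow_lt_rpow_left_iff (by norm_num) |>.2 (by linarith)
  have htpow : ∀ n, t n ^ δ = t₀ ^ δ / ((2:ℝ)^δ) ^ n := by
    intro n
    rw [htdef]
    rw [Real.div_rpow ht₀pos.le (by positivity)]
    congr 1
    rw [← Real.rpow_natCast ((2:ℝ)^δ) n, ← Real.rpow_natCast (2:ℝ) n,
      ← Real.rpow_mul (by norm_num), ← Real.rpow_mul (by norm_num), mul_comm]
  have hb : ∀ n, L (t n) * t n ^ δ ≤ (L t₀ * t₀ ^ δ) * r ^ n := by
    intro n
    have h1 : t n ^ δ = t₀ ^ δ / ((2:ℝ)^δ) ^ n := htpow n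
    have h2 : (0:ℝ) < t n ^ δ := Real.rpow_pos_of_pos (htpos n) δ
    calc L (t n) * t n ^ δ ≤ (c ^ n * L t₀) * t n ^ δ :=
          mul_le_mul_of_nonneg_right (hLbound n) h2.le
      _ = (L t₀ * t₀ ^ δ) * r ^ n := by
          rw [h1, hr, div_pow]; field_simp
  have hnn : ∀ n, 0 ≤ L (t n) * t n ^ δ := fun n =>
    mul_nonneg (hLpos _ (htpos n)).le (Real.rpow_pos_of_pos (htpos n) δ).le
  have hgeo : Tendsto (fun n : ℕ => (L t₀ * t₀ ^ δ) * r ^ n) atTop (𝓝 0) := by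
    have := (tendsto_pow_atTop_nhds_zero_of_lt_one hrpos.le hr1).const_mul (L t₀ * t₀ ^ δ)
    rwa [mul_zero] at this
  exact squeeze_zero hnn hb hgeo

theorem statement18
    {Ω : Type*} [MeasureSpace Ω] [IsProbabilityMeasure (ℙ : Measure Ω)]
    (d : ℕ) (X : Ω → EuclideanSpace ℝ (Fin d)) (hmeas : Measurable X)
    (α : ℝ) (hα : 2 < α)
    (L : ℝ → ℝ) (hLpos : ∀ t : ℝ, 0 < t → 0 < L t)
    (hL : SlowlyVaryingAtZero L)
    (hphi : Tendsto
      (fun k : EuclideanSpace ℝ (Fin d) =>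
        (1 - charFn' X k) / ((L ‖k‖ * ‖k‖ ^ α : ℝ) : ℂ))
      (𝓝[≠] (0 : EuclideanSpace ℝ (Fin d))) (𝓝 1)) :
    ∀ᵐ ω ∂(ℙ : Measure Ω), X ω = 0 := by
  -- get the sequence
  obtain ⟨t, htpos, htend, hsv⟩ := sv_seq' L hLpos hL (α - 2) (by linarith)
  -- per coordinate
  have hcoord : ∀ i : Fin d, ∀ᵐ ω ∂(ℙ : Measure Ω), X ω i = 0 := by
    intro i
    set e : EuclideanSpace ℝ (Fin d) := EuclideanSpace.single i (1:ℝ) with he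
    have hnorme : ‖e‖ = 1 := by simp [he, EuclideanSpace.norm_single]
    have hene : e ≠ 0 := by
      intro h; rw [h] at hnorme; simp at hnorme
    set Y : Ω → ℝ := fun ω => X ω i with hY
    have hYmeas : Measurable Y := by
      have : Measurable fun x : EuclideanSpace ℝ (Fin d) => x i :=
        (EuclideanSpace.proj (𝕜 := ℝ) i).continuous.measurable
      exact this.comp hmeas
    set k : ℕ → EuclideanSpace ℝ (Fin d) := fun n => t n • e with hk
    have hknorm : ∀ n, ‖k n‖ = t n := by
      intro n
      rw [hk]; simp [norm_smul, hnorme, abs_of_pos (htpos n)]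
    have hkinner : ∀ n ω, (inner ℝ (k n) (X ω) : ℝ) = t n * Y ω := by
      intro n ω
      rw [hk]
      simp only
      rw [real_inner_smul_left, he, EuclideanSpace.inner_single_left]
      simp [hY]
    have hkne : ∀ n, k n ≠ 0 := fun n => smul_ne_zero (ne_of_gt (htpos n)) hene
    have hktend : Tendsto k atTop (𝓝[≠] (0 : EuclideanSpace ℝ (Fin d))) := by
      apply tendsto_nhdsWithin_of_tendsto_nhds_of_eventually_within
      · rw [tendsto_zero_iff_norm_tendsto_zero]
        exact htend.congr fun n => (hknorm n).symm
      · exact Filter.Eventually.of_forall fun n => hkne n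
    -- integrability facts
    have hexpmeas : ∀ n, Measurable fun ω => Complex.exp (Complex.I * ((t n * Y ω : ℝ) : ℂ)) := by
      intro n
      exact Complex.measurable_exp.comp
        (measurable_const.mul (Complex.measurable_ofReal.comp ((hYmeas.const_mul (t n)))))
    have hexpint : ∀ n, Integrable (fun ω => Complex.exp (Complex.I * ((t n * Y ω : ℝ) : ℂ)))
        (ℙ : Measure Ω) := by
      intro n
      refine (integrable_const (1:ℝ)).mono' (hexpmeas n).aestronglyMeasurable ?_
      refine Filter.Eventually.of_forall fun ω => ?_
      rw [mul_comm]
      rw [Complex.norm_exp_ofReal_mul_I]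
    have hcosint : ∀ n, Integrable (fun ω => Real.cos (t n * Y ω)) (ℙ : Measure Ω) := by
      intro n
      refine (integrable_const (1:ℝ)).mono'
        ((Real.measurable_cos.comp (hYmeas.const_mul (t n))).aestronglyMeasurable) ?_
      exact Filter.Eventually.of_forall fun ω => by
        simp [Real.abs_cos_le_one]
    -- real part of charFn'
    have hre : ∀ n, 1 - (charFn' X (k n)).re = ∫ ω, (1 - Real.cos (t n * Y ω)) ∂(ℙ : Measure Ω) := by
      intro n
      have h1 : charFn' X (k n) = ∫ ω, Complex.exp (Complex.I * ((t n * Y ω : ℝ) : ℂ)) ∂(ℙ : Measure Ω) := by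
        rw [charFn']
        congr 1
        funext ω
        rw [hkinner n ω]
      have h2 : (charFn' X (k n)).re = ∫ ω, Real.cos (t n * Y ω) ∂(ℙ : Measure Ω) := by
        have h3 := integral_re (hexpint n)
        simp only [RCLike.re_to_complex] at h3
        rw [h1, ← h3]
        congr 1
        funext ω
        rw [mul_comm]
        exact Complex.exp_ofReal_mul_I_re _
      rw [h2, integral_sub (integrable_const 1) (hcosint n)]
      simp
    -- ratio convergence
    have hr : Tendsto (fun n => ((1 - charFn' X (k n)) /
        ((L ‖k n‖ * ‖k n‖ ^ α : ℝ) : ℂ)).re) atTop (𝓝 1) := by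
      have := (Complex.continuous_re.tendsto 1).comp (hphi.comp hktend)
      simpa [Function.comp_def] using this
    set D : ℕ → ℝ := fun n => L (t n) * t n ^ α with hD
    have hDpos : ∀ n, 0 < D n := fun n =>
      mul_pos (hLpos _ (htpos n)) (Real.rpow_pos_of_pos (htpos n) α)
    set I : ℕ → ℝ := fun n => ∫ ω, (1 - Real.cos (t n * Y ω)) ∂(ℙ : Measure Ω) with hI
    have hratio : Tendsto (fun n => I n / D n) atTop (𝓝 1) := by
      refine hr.congr fun n => ?_
      rw [Complex.div_ofReal_re, Complex.sub_re, Complex.one_re, hre n, hknorm n]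
    -- A n := I n / t n ^ 2 → 0
    have hA : Tendsto (fun n => I n / (t n)^2) atTop (𝓝 0) := by
      have hmul := hratio.mul hsv
      rw [one_mul] at hmul
      refine hmul.congr fun n => ?_
      have ht := htpos n
      have hrpow : t n ^ α = t n ^ (α - 2) * t n ^ 2 := by
        rw [← Real.rpow_natCast (t n) 2, ← Real.rpow_add ht]
        norm_num
      have hLn := hLpos _ ht
      have h2 : (t n : ℝ)^2 ≠ 0 := by positivity
      have h3 : t n ^ (α - 2) ≠ 0 := (Real.rpow_pos_of_pos ht _).ne'
      field_simp [hD, hrpow]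
      simp only [hD, hrpow]; ring
    -- Fatou
    set f : ℕ → Ω → ENNReal := fun n ω => ENNReal.ofReal ((1 - Real.cos (t n * Y ω)) / (t n)^2)
      with hf
    have hfmeas : ∀ n, Measurable (f n) := by
      intro n
      apply ENNReal.measurable_ofReal.comp
      exact ((measurable_const.sub (Real.measurable_cos.comp (hYmeas.const_mul (t n)))).div_const _)
    have hliminf : ∀ ω, liminf (fun n => f n ω) atTop = ENNReal.ofReal ((Y ω)^2 / 2) := by
      intro ω
      have httend : Tendsto t atTop (𝓝[>] 0) := by
        apply tendsto_nhdsWithin_of_tendsto_nhds_of_eventually_within _ htend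
        exact Filter.Eventually.of_forall fun n => htpos n
      have h1 : Tendsto (fun n => (1 - Real.cos (t n * Y ω)) / (t n)^2) atTop
          (𝓝 ((Y ω)^2/2)) := (cos_lim' (Y ω)).comp httend
      have h2 : Tendsto (fun n => f n ω) atTop (𝓝 (ENNReal.ofReal ((Y ω)^2/2))) :=
        (ENNReal.continuous_ofReal.tendsto _).comp h1
      exact h2.liminf_eq
    have hnnint : ∀ n, Integrable (fun ω => (1 - Real.cos (t n * Y ω)) / (t n)^2)
        (ℙ : Measure Ω) := fun n => ((integrable_const 1).sub (hcosint n)).div_const _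
    have hnn : ∀ n, 0 ≤ᵐ[(ℙ : Measure Ω)] fun ω => (1 - Real.cos (t n * Y ω)) / (t n)^2 := by
      intro n
      refine Filter.Eventually.of_forall fun ω => ?_
      have := Real.cos_le_one (t n * Y ω)
      apply div_nonneg (by linarith) (sq_nonneg _)
    have hlint : ∀ n, ∫⁻ ω, f n ω ∂(ℙ : Measure Ω) = ENNReal.ofReal (I n / (t n)^2) := by
      intro n
      rw [← ofReal_integral_eq_lintegral_ofReal (hnnint n) (hnn n)]
      congr 1
      rw [hI]
      simp only
      rw [integral_div]
    have hliminf0 : liminf (fun n => ∫⁻ ω, f n ω ∂(ℙ : Measure Ω)) atTop = 0 := by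
      have : Tendsto (fun n => ∫⁻ ω, f n ω ∂(ℙ : Measure Ω)) atTop (𝓝 0) := by
        have h1 : Tendsto (fun n => ENNReal.ofReal (I n / (t n)^2)) atTop
            (𝓝 (ENNReal.ofReal 0)) := (ENNReal.continuous_ofReal.tendsto _).comp hA
        rw [ENNReal.ofReal_zero] at h1
        exact h1.congr fun n => (hlint n).symm
      exact this.liminf_eq
    have hfatou : ∫⁻ ω, ENNReal.ofReal ((Y ω)^2/2) ∂(ℙ : Measure Ω) = 0 := by
      have h := lintegral_liminf_le hfmeas (μ := (ℙ : Measure Ω)) (u := atTop)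
      rw [hliminf0] at h
      have h2 : ∫⁻ ω, liminf (fun n => f n ω) atTop ∂(ℙ : Measure Ω)
          = ∫⁻ ω, ENNReal.ofReal ((Y ω)^2/2) ∂(ℙ : Measure Ω) := by
        congr 1
        funext ω
        exact hliminf ω
      rw [h2] at h
      exact le_antisymm h zero_le
    have hY2meas : Measurable fun ω => ENNReal.ofReal ((Y ω)^2/2) :=
      ENNReal.measurable_ofReal.comp ((hYmeas.pow_const 2).div_const 2)
    have := (lintegral_eq_zero_iff hY2meas).1 hfatou
    filter_upwards [this] with ω hω
    simp only [Pi.zero_apply, ENNReal.ofReal_eq_zero] at hω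
    have : (Y ω)^2 ≤ 0 := by linarith
    have : (Y ω)^2 = 0 := le_antisymm this (sq_nonneg _)
    exact pow_eq_zero_iff (n := 2) (by norm_num) |>.1 this
  have := (ae_all_iff.2 hcoord)
  filter_upwards [this] with ω hω
  ext j
  simpa using hω j
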